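/- Let N ≥ 1. Equip B_sp × B_sp with the tensor-product type-B_N Kashiwara operators. Then every element u ⊗ v lies in the connected component of exactly one of the elements (+,…,+) ⊗ (+^k, −^{N−k}) with 0 ≤ k ≤ N, where (+^k, −^{N−k}) denotes the sign sequence whose first k entries are + and last N−k entries are −. Moreover, these elements are precisely the elements x ⊗ y with f̃_l(x ⊗ y) = 0 for all 1 ≤ l ≤ N. -/

import Mathlib

namespace CrystalPaper

/-- A sign sequence of length `N`: `true` codes `+`, `false` codes `−`. -/
abbrev Seq (N : ℕ) := Fin N → Bool

/-- The constant sequence `(+,…,+)`. -/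
def top (N : ℕ) : Seq N := fun _ => true

/-- The constant sequence `(−,…,−)`. -/
def bot (N : ℕ) : Seq N := fun _ => false

/-- The sequence `(+^k, −^{N−k})` (first `k` entries `+`, the rest `−`). -/
def lowSeq (N k : ℕ) : Seq N := fun i => decide ((i : ℕ) < k)

/-- The number of `−` entries of a sign sequence. -/
def minusCount (N : ℕ) (b : Seq N) : ℕ :=
  (Finset.univ.filter (fun i => b i = false)).card

/-- `B_sp^+`: sign sequences with an even number of `−` entries. -/
def BspPlus (N : ℕ) (b : Seq N) : Prop := Even (minusCount N b)

/-- `B_sp^−`: sign sequences with an odd number of `−` entries. -/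
def BspMinus (N : ℕ) (b : Seq N) : Prop := Odd (minusCount N b)

/-- The type-`B_N` Kashiwara raising operator `ẽ_l`, labels `1 ≤ l ≤ N`.
For `1 ≤ l ≤ N−1` it replaces `(b_l, b_{l+1}) = (+,−)` by `(−,+)`;
`ẽ_N` replaces `b_N = +` by `−`. -/
def eB (N l : ℕ) (b : Seq N) : Option (Seq N) :=
  if h : 1 ≤ l ∧ l + 1 ≤ N then
    let i : Fin N := ⟨l - 1, by omega⟩
    let j : Fin N := ⟨l, by omega⟩
    if b i = true ∧ b j = false then
      some (Function.update (Function.update b i false) j true)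
    else none
  else if h2 : l = N ∧ 1 ≤ N then
    let i : Fin N := ⟨N - 1, by omega⟩
    if b i = true then some (Function.update b i false) else none
  else none

/-- The type-`B_N` Kashiwara lowering operator `f̃_l`, labels `1 ≤ l ≤ N`.
For `1 ≤ l ≤ N−1` it replaces `(b_l, b_{l+1}) = (−,+)` by `(+,−)`;
`f̃_N` replaces `b_N = −` by `+`. -/
def fB (N l : ℕ) (b : Seq N) : Option (Seq N) :=
  if h : 1 ≤ l ∧ l + 1 ≤ N then
    let i : Fin N := ⟨l - 1, by omega⟩
    let j : Fin N := ⟨l, by omega⟩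
    if b i = false ∧ b j = true then
      some (Function.update (Function.update b i true) j false)
    else none
  else if h2 : l = N ∧ 1 ≤ N then
    let i : Fin N := ⟨N - 1, by omega⟩
    if b i = false then some (Function.update b i true) else none
  else none

/-- `n`-fold iteration of a partial operator. -/
def iterOp {σ : Type*} (f : σ → Option σ) : ℕ → σ → Option σ
  | 0, x => some x
  | n + 1, x => (f x).bind (iterOp f n)

/-- `max {n ≥ 0 : f^n x ≠ 0}`, as a supremum in `ℕ`.  Used for the string
lengths `ε_l(x) = max{n : ẽ_l^n x ≠ 0}` and `φ_l(x) = max{n : f̃_l^n x ≠ 0}`. -/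
noncomputable def opMax {σ : Type*} (f : σ → Option σ) (x : σ) : ℕ :=
  sSup {n | iterOp f n x ≠ none}

/-- The tensor-product raising operator `ẽ_l` on pairs (lowest-weight convention),
type `B_N`. -/
noncomputable def teB (N l : ℕ) (p : Seq N × Seq N) : Option (Seq N × Seq N) :=
  if opMax (eB N l) p.1 ≤ opMax (fB N l) p.2 then (eB N l p.2).map fun y => (p.1, y)
  else (eB N l p.1).map fun x => (x, p.2)

/-- The tensor-product lowering operator `f̃_l` on pairs (lowest-weight convention),
type `B_N`. -/
noncomputable def tfB (N l : ℕ) (p : Seq N × Seq N) : Option (Seq N × Seq N) :=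
  if opMax (eB N l) p.1 < opMax (fB N l) p.2 then (fB N l p.2).map fun y => (p.1, y)
  else (fB N l p.1).map fun x => (x, p.2)

/-- Connectedness in the tensor product of two type-`B_N` spin crystals. -/
def ConnB (N : ℕ) (p q : Seq N × Seq N) : Prop :=
  Relation.EqvGen (fun p q => ∃ l, 1 ≤ l ∧ l ≤ N ∧ (teB N l p = some q ∨ tfB N l p = some q)) p q
section Aux
variable {N : ℕ}

/-! ### Characterizations of `eB`, `fB` -/

lemma fB_char_lt (N l : ℕ) (hl1 : 1 ≤ l) (hlN : l + 1 ≤ N) (b : Seq N) :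
    fB N l b =
      if b ⟨l - 1, by omega⟩ = false ∧ b ⟨l, by omega⟩ = true then
        some (Function.update (Function.update b ⟨l - 1, by omega⟩ true) ⟨l, by omega⟩ false)
      else none := by
  unfold fB
  rw [dif_pos ⟨hl1, hlN⟩]

lemma eB_char_lt (N l : ℕ) (hl1 : 1 ≤ l) (hlN : l + 1 ≤ N) (b : Seq N) :
    eB N l b =
      if b ⟨l - 1, by omega⟩ = true ∧ b ⟨l, by omega⟩ = false then
        some (Function.update (Function.update b ⟨l - 1, by omega⟩ false) ⟨l, by omega⟩ true)
      else none := by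
  unfold eB
  rw [dif_pos ⟨hl1, hlN⟩]

lemma fB_char_N (N : ℕ) (hN : 1 ≤ N) (b : Seq N) :
    fB N N b =
      if b ⟨N - 1, by omega⟩ = false then
        some (Function.update b ⟨N - 1, by omega⟩ true)
      else none := by
  unfold fB
  rw [dif_neg (by omega), dif_pos ⟨rfl, hN⟩]

lemma eB_char_N (N : ℕ) (hN : 1 ≤ N) (b : Seq N) :
    eB N N b =
      if b ⟨N - 1, by omega⟩ = true then
        some (Function.update b ⟨N - 1, by omega⟩ false)
      else none := by
  unfold eB
  rw [dif_neg (by omega), dif_pos ⟨rfl, hN⟩]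

lemma fin_ne_of_val_ne {a b : ℕ} (ha : a < N) (hb : b < N) (h : a ≠ b) :
    (⟨a, ha⟩ : Fin N) ≠ ⟨b, hb⟩ := by
  simp [Fin.ext_iff]; omega

/-! ### Nilpotency of order 2 -/

lemma fB_nil (N l : ℕ) (b b' : Seq N) (h : fB N l b = some b') : fB N l b' = none := by
  by_cases hc : 1 ≤ l ∧ l + 1 ≤ N
  · rw [fB_char_lt N l hc.1 hc.2] at h ⊢
    split_ifs at h with h1
    · injection h with h'
      rw [if_neg]
      intro hcc
      rw [← h'] at hcc
      have hij : (⟨l - 1, by omega⟩ : Fin N) ≠ ⟨l, by omega⟩ :=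
        fin_ne_of_val_ne _ _ (by omega)
      rw [Function.update_of_ne hij, Function.update_self] at hcc
      exact absurd hcc.1 (by simp)
  · by_cases hc2 : l = N ∧ 1 ≤ N
    · obtain ⟨rfl, hN⟩ := hc2
      rw [fB_char_N _ hN] at h ⊢
      split_ifs at h with h1
      · injection h with h'
        rw [if_neg]
        rw [← h', Function.update_self]
        simp
    · unfold fB at h
      rw [dif_neg hc, dif_neg hc2] at h
      exact absurd h (by simp)

lemma eB_nil (N l : ℕ) (b b' : Seq N) (h : eB N l b = some b') : eB N l b' = none := by
  by_cases hc : 1 ≤ l ∧ l + 1 ≤ N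
  · rw [eB_char_lt N l hc.1 hc.2] at h ⊢
    split_ifs at h with h1
    · injection h with h'
      rw [if_neg]
      intro hcc
      rw [← h'] at hcc
      have hij : (⟨l - 1, by omega⟩ : Fin N) ≠ ⟨l, by omega⟩ :=
        fin_ne_of_val_ne _ _ (by omega)
      rw [Function.update_of_ne hij, Function.update_self] at hcc
      exact absurd hcc.1 (by simp)
  · by_cases hc2 : l = N ∧ 1 ≤ N
    · obtain ⟨rfl, hN⟩ := hc2
      rw [eB_char_N _ hN] at h ⊢
      split_ifs at h with h1
      · injection h with h'
        rw [if_neg]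
        rw [← h', Function.update_self]
        simp
    · unfold eB at h
      rw [dif_neg hc, dif_neg hc2] at h
      exact absurd h (by simp)

/-! ### Values of `opMax` -/

lemma opMax_of_none {σ : Type*} (f : σ → Option σ) (x : σ) (h : f x = none) :
    opMax f x = 0 := by
  have hset : {n | iterOp f n x ≠ none} = {0} := by
    ext n
    cases n with
    | zero => simp [iterOp]
    | succ m => simp [iterOp, h]
  rw [opMax, hset, csSup_singleton]

lemma opMax_of_some {σ : Type*} (f : σ → Option σ) (x y : σ) (hxy : f x = some y)
    (hy : f y = none) : opMax f x = 1 := by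
  have hset : {n | iterOp f n x ≠ none} = {0, 1} := by
    ext n
    match n with
    | 0 => simp [iterOp]
    | 1 => simp [iterOp, hxy]
    | (m + 2) => simp [iterOp, hxy, hy]
  rw [opMax, hset, csSup_pair]; rfl

end Aux
section Aux2

/-! ### opMax formulas for eB, fB -/

lemma opMax_fB_lt (N l : ℕ) (hl1 : 1 ≤ l) (hlN : l + 1 ≤ N) (b : Seq N) :
    opMax (fB N l) b =
      if b ⟨l - 1, by omega⟩ = false ∧ b ⟨l, by omega⟩ = true then 1 else 0 := by
  split_ifs with h
  · have hsome : fB N l b = some (Function.update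
        (Function.update b ⟨l - 1, by omega⟩ true) ⟨l, by omega⟩ false) := by
      rw [fB_char_lt N l hl1 hlN, if_pos h]
    exact opMax_of_some _ _ _ hsome (fB_nil N l b _ hsome)
  · exact opMax_of_none _ _ (by rw [fB_char_lt N l hl1 hlN, if_neg h])

lemma opMax_eB_lt (N l : ℕ) (hl1 : 1 ≤ l) (hlN : l + 1 ≤ N) (b : Seq N) :
    opMax (eB N l) b =
      if b ⟨l - 1, by omega⟩ = true ∧ b ⟨l, by omega⟩ = false then 1 else 0 := by
  split_ifs with h
  · have hsome : eB N l b = some (Function.update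
        (Function.update b ⟨l - 1, by omega⟩ false) ⟨l, by omega⟩ true) := by
      rw [eB_char_lt N l hl1 hlN, if_pos h]
    exact opMax_of_some _ _ _ hsome (eB_nil N l b _ hsome)
  · exact opMax_of_none _ _ (by rw [eB_char_lt N l hl1 hlN, if_neg h])

lemma opMax_fB_N (N : ℕ) (hN : 1 ≤ N) (b : Seq N) :
    opMax (fB N N) b = if b ⟨N - 1, by omega⟩ = false then 1 else 0 := by
  split_ifs with h
  · have hsome : fB N N b = some (Function.update b ⟨N - 1, by omega⟩ true) := by
      rw [fB_char_N N hN, if_pos h]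
    exact opMax_of_some _ _ _ hsome (fB_nil N N b _ hsome)
  · exact opMax_of_none _ _ (by rw [fB_char_N N hN, if_neg h])

lemma opMax_eB_N (N : ℕ) (hN : 1 ≤ N) (b : Seq N) :
    opMax (eB N N) b = if b ⟨N - 1, by omega⟩ = true then 1 else 0 := by
  split_ifs with h
  · have hsome : eB N N b = some (Function.update b ⟨N - 1, by omega⟩ false) := by
      rw [eB_char_N N hN, if_pos h]
    exact opMax_of_some _ _ _ hsome (eB_nil N N b _ hsome)
  · exact opMax_of_none _ _ (by rw [eB_char_N N hN, if_neg h])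

/-! ### The invariant -/

/-- Pointwise term of the height function. -/
def dterm {N : ℕ} (u v : Seq N) (i : ℕ) : ℤ :=
  if h : i < N then
    (if v ⟨i, h⟩ = false then 1 else 0) - (if u ⟨i, h⟩ = false then 1 else 0)
  else 0

/-- Height function: difference of minus-counts on the first `j` coordinates. -/
def DD {N : ℕ} (u v : Seq N) (j : ℕ) : ℤ := ∑ i ∈ Finset.range j, dterm u v i

/-- The component invariant. -/
noncomputable def Inv (N : ℕ) (p : Seq N × Seq N) : ℤ :=
  (Finset.range (N + 1)).sup' ⟨0, by simp⟩ (DD p.1 p.2)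

lemma DD_succ {N : ℕ} (u v : Seq N) (j : ℕ) :
    DD u v (j + 1) = DD u v j + dterm u v j :=
  Finset.sum_range_succ _ _

lemma dterm_update_fst {N : ℕ} (u v : Seq N) (i0 : Fin N) (t : Bool) (i : ℕ) :
    dterm (Function.update u i0 t) v i =
      dterm u v i + (if i = (i0 : ℕ) then
        ((if u i0 = false then 1 else 0) - (if t = false then 1 else 0) : ℤ) else 0) := by
  unfold dterm
  by_cases h : i < N
  · rw [dif_pos h, dif_pos h]
    have he : ((⟨i, h⟩ : Fin N) = i0) ↔ i = (i0 : ℕ) := by simp [Fin.ext_iff]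
    rw [Function.update_apply]
    by_cases hi : (⟨i, h⟩ : Fin N) = i0
    · rw [if_pos hi, if_pos (he.mp hi), hi]; ring
    · rw [if_neg hi, if_neg (fun hh => hi (he.mpr hh))]; ring
  · rw [dif_neg h, dif_neg h, if_neg (by have := i0.isLt; omega)]; ring

lemma dterm_update_snd {N : ℕ} (u v : Seq N) (i0 : Fin N) (t : Bool) (i : ℕ) :
    dterm u (Function.update v i0 t) i =
      dterm u v i + (if i = (i0 : ℕ) then
        ((if t = false then 1 else 0) - (if v i0 = false then 1 else 0) : ℤ) else 0) := by
  unfold dterm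
  by_cases h : i < N
  · rw [dif_pos h, dif_pos h]
    have he : ((⟨i, h⟩ : Fin N) = i0) ↔ i = (i0 : ℕ) := by simp [Fin.ext_iff]
    rw [Function.update_apply]
    by_cases hi : (⟨i, h⟩ : Fin N) = i0
    · rw [if_pos hi, if_pos (he.mp hi), hi]; ring
    · rw [if_neg hi, if_neg (fun hh => hi (he.mpr hh))]; ring
  · rw [dif_neg h, dif_neg h, if_neg (by have := i0.isLt; omega)]; ring

lemma DD_update_fst {N : ℕ} (u v : Seq N) (i0 : Fin N) (t : Bool) (j : ℕ) :
    DD (Function.update u i0 t) v j =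
      DD u v j + (if (i0 : ℕ) < j then
        ((if u i0 = false then 1 else 0) - (if t = false then 1 else 0) : ℤ) else 0) := by
  unfold DD
  simp only [dterm_update_fst, Finset.sum_add_distrib]
  congr 1
  rw [Finset.sum_ite_eq' (Finset.range j) ((i0 : ℕ))
    (fun _ => ((if u i0 = false then 1 else 0) - (if t = false then 1 else 0) : ℤ))]
  simp [Finset.mem_range]

lemma DD_update_snd {N : ℕ} (u v : Seq N) (i0 : Fin N) (t : Bool) (j : ℕ) :
    DD u (Function.update v i0 t) j =
      DD u v j + (if (i0 : ℕ) < j then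
        ((if t = false then 1 else 0) - (if v i0 = false then 1 else 0) : ℤ) else 0) := by
  unfold DD
  simp only [dterm_update_snd, Finset.sum_add_distrib]
  congr 1
  rw [Finset.sum_ite_eq' (Finset.range j) ((i0 : ℕ))
    (fun _ => ((if t = false then 1 else 0) - (if v i0 = false then 1 else 0) : ℤ))]
  simp [Finset.mem_range]

/-- Key sup lemma: if `D` and `D'` agree except at `j₀`, and at some other point `j'`
both values are dominated, then the sups agree. -/
lemma sup_eq_key (N : ℕ) (D D' : ℕ → ℤ) (j₀ j' : ℕ) (hj' : j' ≤ N) (hne : j' ≠ j₀)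
    (hag : ∀ j, j ≤ N → j ≠ j₀ → D' j = D j) (h1 : D j₀ ≤ D j') (h2 : D' j₀ ≤ D j') :
    (Finset.range (N + 1)).sup' ⟨0, by simp⟩ D =
      (Finset.range (N + 1)).sup' ⟨0, by simp⟩ D' := by
  have hj'mem : j' ∈ Finset.range (N + 1) := Finset.mem_range.mpr (by omega)
  apply le_antisymm
  · apply Finset.sup'_le
    intro j hj
    have hjN : j ≤ N := by have := Finset.mem_range.mp hj; omega
    by_cases hj0 : j = j₀
    · subst hj0
      calc D j ≤ D j' := h1
        _ = D' j' := (hag j' hj' hne).symm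
        _ ≤ _ := Finset.le_sup' _ hj'mem
    · calc D j = D' j := (hag j hjN hj0).symm
        _ ≤ _ := Finset.le_sup' _ hj
  · apply Finset.sup'_le
    intro j hj
    have hjN : j ≤ N := by have := Finset.mem_range.mp hj; omega
    by_cases hj0 : j = j₀
    · subst hj0
      calc D' j ≤ D j' := h2
        _ ≤ _ := Finset.le_sup' _ hj'mem
    · calc D' j = D j := hag j hjN hj0
        _ ≤ _ := Finset.le_sup' _ hj

end Aux2

section Aux3

lemma DD_update_fst_ft {N : ℕ} (u v : Seq N) (i0 : Fin N) (h : u i0 = false) (j : ℕ) :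
    DD (Function.update u i0 true) v j = DD u v j + (if (i0 : ℕ) < j then 1 else 0) := by
  rw [DD_update_fst, h]; norm_num

lemma DD_update_fst_tf {N : ℕ} (u v : Seq N) (i0 : Fin N) (h : u i0 = true) (j : ℕ) :
    DD (Function.update u i0 false) v j = DD u v j + (if (i0 : ℕ) < j then -1 else 0) := by
  rw [DD_update_fst, h]; norm_num

lemma DD_update_snd_ft {N : ℕ} (u v : Seq N) (i0 : Fin N) (h : v i0 = false) (j : ℕ) :
    DD u (Function.update v i0 true) j = DD u v j + (if (i0 : ℕ) < j then -1 else 0) := by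
  rw [DD_update_snd, h]; norm_num

lemma DD_update_snd_tf {N : ℕ} (u v : Seq N) (i0 : Fin N) (h : v i0 = true) (j : ℕ) :
    DD u (Function.update v i0 false) j = DD u v j + (if (i0 : ℕ) < j then 1 else 0) := by
  rw [DD_update_snd, h]; norm_num

lemma dterm_eval {N : ℕ} (u v : Seq N) (i : ℕ) (h : i < N) :
    dterm u v i = (if v ⟨i, h⟩ = false then 1 else 0) - (if u ⟨i, h⟩ = false then 1 else 0) := by
  rw [dterm, dif_pos h]

/-- M1: `f`-swap in the first factor. -/
lemma inv_M1 (N l : ℕ) (hl1 : 1 ≤ l) (hlN : l + 1 ≤ N) (u v : Seq N)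
    (hui : u ⟨l - 1, by omega⟩ = false) (huj : u ⟨l, by omega⟩ = true)
    (hside : ¬(v ⟨l - 1, by omega⟩ = false ∧ v ⟨l, by omega⟩ = true)) :
    Inv N (u, v) = Inv N
      (Function.update (Function.update u ⟨l - 1, by omega⟩ true) ⟨l, by omega⟩ false, v) := by
  have hiN : l - 1 < N := by omega
  have hjN : l < N := by omega
  have hij : (⟨l - 1, hiN⟩ : Fin N) ≠ ⟨l, hjN⟩ := fin_ne_of_val_ne _ _ (by omega)
  replace hui : u ⟨l - 1, hiN⟩ = false := hui
  replace huj : u ⟨l, hjN⟩ = true := huj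
  replace hside : ¬(v ⟨l - 1, hiN⟩ = false ∧ v ⟨l, hjN⟩ = true) := hside
  show Inv N (u, v) = Inv N
      (Function.update (Function.update u ⟨l - 1, hiN⟩ true) ⟨l, hjN⟩ false, v)
  have huj' : (Function.update u ⟨l - 1, hiN⟩ true) ⟨l, hjN⟩ = true := by
    rw [Function.update_of_ne hij.symm]; exact huj
  have hD' : ∀ jj, DD (Function.update (Function.update u ⟨l - 1, hiN⟩ true)
        ⟨l, hjN⟩ false) v jj
      = DD u v jj + ((if l - 1 < jj then 1 else 0) + (if l < jj then -1 else 0)) := by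
    intro jj
    rw [DD_update_fst_tf _ _ _ huj', DD_update_fst_ft _ _ _ hui]
    simp only [Fin.val_mk]
    ring
  have hstep1 : DD u v l = DD u v (l - 1) + dterm u v (l - 1) := by
    have h := DD_succ u v (l - 1)
    rwa [Nat.sub_add_cancel hl1] at h
  have hstep2 : DD u v (l + 1) = DD u v l + dterm u v l := DD_succ u v l
  have hd1 : dterm u v (l - 1) = (if v ⟨l - 1, hiN⟩ = false then 1 else 0) - 1 := by
    rw [dterm_eval u v _ hiN, hui]
    norm_num
  have hd2 : dterm u v l = (if v ⟨l, hjN⟩ = false then 1 else 0) := by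
    rw [dterm_eval u v _ hjN, huj]
    norm_num
  unfold Inv
  dsimp only
  rcases Bool.eq_false_or_eq_true (v ⟨l - 1, hiN⟩) with hvi | hvi
  · -- v_{l-1} = + : compare with j' = l-1
    apply sup_eq_key N _ _ l (l - 1) (by omega) (by omega)
    · intro jj hjj hne
      rw [hD']
      split_ifs <;> omega
    · rw [hstep1, hd1, if_neg (show ¬(v ⟨l - 1, hiN⟩ = false) from by simp [hvi])]; omega
    · rw [hD' l, hstep1, hd1, if_neg (show ¬(v ⟨l - 1, hiN⟩ = false) from by simp [hvi])]
      split_ifs <;> omega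
  · -- v_{l-1} = − hence v_l = − : compare with j' = l+1
    have hvj : v ⟨l, hjN⟩ = false := by
      rcases Bool.eq_false_or_eq_true (v ⟨l, hjN⟩) with h | h
      · exact absurd ⟨hvi, h⟩ hside
      · exact h
    apply sup_eq_key N _ _ l (l + 1) (by omega) (by omega)
    · intro jj hjj hne
      rw [hD']
      split_ifs <;> omega
    · rw [hstep2, hd2, if_pos hvj]; omega
    · rw [hD' l, hstep2, hd2, if_pos hvj]
      split_ifs <;> omega

/-- M2: `f`-swap in the second factor. -/
lemma inv_M2 (N l : ℕ) (hl1 : 1 ≤ l) (hlN : l + 1 ≤ N) (u v : Seq N)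
    (hvi : v ⟨l - 1, by omega⟩ = false) (hvj : v ⟨l, by omega⟩ = true)
    (hside : ¬(u ⟨l - 1, by omega⟩ = true ∧ u ⟨l, by omega⟩ = false)) :
    Inv N (u, v) = Inv N
      (u, Function.update (Function.update v ⟨l - 1, by omega⟩ true) ⟨l, by omega⟩ false) := by
  have hiN : l - 1 < N := by omega
  have hjN : l < N := by omega
  have hij : (⟨l - 1, hiN⟩ : Fin N) ≠ ⟨l, hjN⟩ := fin_ne_of_val_ne _ _ (by omega)
  replace hvi : v ⟨l - 1, hiN⟩ = false := hvi
  replace hvj : v ⟨l, hjN⟩ = true := hvj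
  replace hside : ¬(u ⟨l - 1, hiN⟩ = true ∧ u ⟨l, hjN⟩ = false) := hside
  show Inv N (u, v) = Inv N
      (u, Function.update (Function.update v ⟨l - 1, hiN⟩ true) ⟨l, hjN⟩ false)
  have hvj' : (Function.update v ⟨l - 1, hiN⟩ true) ⟨l, hjN⟩ = true := by
    rw [Function.update_of_ne hij.symm]; exact hvj
  have hD' : ∀ jj, DD u (Function.update (Function.update v ⟨l - 1, hiN⟩ true)
        ⟨l, hjN⟩ false) jj
      = DD u v jj + ((if l - 1 < jj then -1 else 0) + (if l < jj then 1 else 0)) := by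
    intro jj
    rw [DD_update_snd_tf _ _ _ hvj', DD_update_snd_ft _ _ _ hvi]
    simp only [Fin.val_mk]
    ring
  have hstep1 : DD u v l = DD u v (l - 1) + dterm u v (l - 1) := by
    have h := DD_succ u v (l - 1)
    rwa [Nat.sub_add_cancel hl1] at h
  have hstep2 : DD u v (l + 1) = DD u v l + dterm u v l := DD_succ u v l
  have hd1 : dterm u v (l - 1) = 1 - (if u ⟨l - 1, hiN⟩ = false then 1 else 0) := by
    rw [dterm_eval u v _ hiN, hvi]
    norm_num
  have hd2 : dterm u v l = -(if u ⟨l, hjN⟩ = false then 1 else 0) := by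
    rw [dterm_eval u v _ hjN, hvj]
    norm_num
  unfold Inv
  dsimp only
  rcases Bool.eq_false_or_eq_true (u ⟨l, hjN⟩) with huj | huj
  · -- u_l = + : compare with j' = l+1
    apply sup_eq_key N _ _ l (l + 1) (by omega) (by omega)
    · intro jj hjj hne
      rw [hD']
      split_ifs <;> omega
    · rw [hstep2, hd2, if_neg (show ¬(u ⟨l, hjN⟩ = false) from by simp [huj])]; omega
    · rw [hD' l, hstep2, hd2, if_neg (show ¬(u ⟨l, hjN⟩ = false) from by simp [huj])]
      split_ifs <;> omega
  · -- u_l = − hence u_{l-1} = − : compare with j' = l-1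
    have hui : u ⟨l - 1, hiN⟩ = false := by
      rcases Bool.eq_false_or_eq_true (u ⟨l - 1, hiN⟩) with h | h
      · exact absurd ⟨h, huj⟩ hside
      · exact h
    apply sup_eq_key N _ _ l (l - 1) (by omega) (by omega)
    · intro jj hjj hne
      rw [hD']
      split_ifs <;> omega
    · rw [hstep1, hd1, if_pos hui]; omega
    · rw [hD' l, hstep1, hd1, if_pos hui]
      split_ifs <;> omega

/-- M5: `f`-flip of the last letter of the first factor. -/
lemma inv_M5 (N : ℕ) (hN : 1 ≤ N) (u v : Seq N)
    (hui : u ⟨N - 1, by omega⟩ = false) (hside : v ⟨N - 1, by omega⟩ = true) :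
    Inv N (u, v) = Inv N (Function.update u ⟨N - 1, by omega⟩ true, v) := by
  have hiN : N - 1 < N := by omega
  replace hui : u ⟨N - 1, hiN⟩ = false := hui
  replace hside : v ⟨N - 1, hiN⟩ = true := hside
  show Inv N (u, v) = Inv N (Function.update u ⟨N - 1, hiN⟩ true, v)
  have hD' : ∀ jj, DD (Function.update u ⟨N - 1, hiN⟩ true) v jj
      = DD u v jj + (if N - 1 < jj then 1 else 0) :=
    fun jj => DD_update_fst_ft _ _ _ hui jj
  have hstep1 : DD u v N = DD u v (N - 1) + dterm u v (N - 1) := by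
    have h := DD_succ u v (N - 1)
    rwa [Nat.sub_add_cancel hN] at h
  have hd1 : dterm u v (N - 1) = -1 := by
    rw [dterm_eval u v _ hiN, hui, hside]
    norm_num
  unfold Inv
  dsimp only
  apply sup_eq_key N _ _ N (N - 1) (by omega) (by omega)
  · intro jj hjj hne
    rw [hD', if_neg (by omega)]
    ring
  · rw [hstep1, hd1]; omega
  · rw [hD' N, if_pos (by omega), hstep1, hd1]; omega

/-- M6: `f`-flip of the last letter of the second factor. -/
lemma inv_M6 (N : ℕ) (hN : 1 ≤ N) (u v : Seq N)
    (hvi : v ⟨N - 1, by omega⟩ = false) (hside : u ⟨N - 1, by omega⟩ = false) :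
    Inv N (u, v) = Inv N (u, Function.update v ⟨N - 1, by omega⟩ true) := by
  have hiN : N - 1 < N := by omega
  replace hvi : v ⟨N - 1, hiN⟩ = false := hvi
  replace hside : u ⟨N - 1, hiN⟩ = false := hside
  show Inv N (u, v) = Inv N (u, Function.update v ⟨N - 1, hiN⟩ true)
  have hD' : ∀ jj, DD u (Function.update v ⟨N - 1, hiN⟩ true) jj
      = DD u v jj + (if N - 1 < jj then -1 else 0) :=
    fun jj => DD_update_snd_ft _ _ _ hvi jj
  have hstep1 : DD u v N = DD u v (N - 1) + dterm u v (N - 1) := by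
    have h := DD_succ u v (N - 1)
    rwa [Nat.sub_add_cancel hN] at h
  have hd1 : dterm u v (N - 1) = 0 := by
    rw [dterm_eval u v _ hiN, hvi, hside]
    norm_num
  unfold Inv
  dsimp only
  apply sup_eq_key N _ _ N (N - 1) (by omega) (by omega)
  · intro jj hjj hne
    rw [hD', if_neg (by omega)]
    ring
  · rw [hstep1, hd1]; omega
  · rw [hD' N, if_pos (by omega), hstep1, hd1]; omega

end Aux3
section Aux4

/-- M3: `e`-swap in the first factor. -/
lemma inv_M3 (N l : ℕ) (hl1 : 1 ≤ l) (hlN : l + 1 ≤ N) (u v : Seq N)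
    (hui : u ⟨l - 1, by omega⟩ = true) (huj : u ⟨l, by omega⟩ = false)
    (hside : ¬(v ⟨l - 1, by omega⟩ = false ∧ v ⟨l, by omega⟩ = true)) :
    Inv N (u, v) = Inv N
      (Function.update (Function.update u ⟨l - 1, by omega⟩ false) ⟨l, by omega⟩ true, v) := by
  have hiN : l - 1 < N := by omega
  have hjN : l < N := by omega
  have hij : (⟨l - 1, hiN⟩ : Fin N) ≠ ⟨l, hjN⟩ := fin_ne_of_val_ne _ _ (by omega)
  set u' : Seq N := Function.update (Function.update u ⟨l - 1, hiN⟩ false) ⟨l, hjN⟩ true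
    with hu'
  have h1 : u' ⟨l - 1, hiN⟩ = false := by
    rw [hu', Function.update_of_ne hij, Function.update_self]
  have h2 : u' ⟨l, hjN⟩ = true := by rw [hu', Function.update_self]
  have key := inv_M1 N l hl1 hlN u' v h1 h2 hside
  have hback : Function.update (Function.update u' ⟨l - 1, hiN⟩ true) ⟨l, hjN⟩ false = u := by
    funext x
    by_cases hx : x = (⟨l, hjN⟩ : Fin N)
    · subst hx
      rw [Function.update_self, huj]
    · rw [Function.update_of_ne hx]
      by_cases hx2 : x = (⟨l - 1, hiN⟩ : Fin N)
      · subst hx2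
        rw [Function.update_self, hui]
      · rw [Function.update_of_ne hx2, hu', Function.update_of_ne hx,
          Function.update_of_ne hx2]
  rw [hback] at key
  exact key.symm

/-- M4: `e`-swap in the second factor. -/
lemma inv_M4 (N l : ℕ) (hl1 : 1 ≤ l) (hlN : l + 1 ≤ N) (u v : Seq N)
    (hvi : v ⟨l - 1, by omega⟩ = true) (hvj : v ⟨l, by omega⟩ = false)
    (hside : ¬(u ⟨l - 1, by omega⟩ = true ∧ u ⟨l, by omega⟩ = false)) :
    Inv N (u, v) = Inv N
      (u, Function.update (Function.update v ⟨l - 1, by omega⟩ false) ⟨l, by omega⟩ true) := by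
  have hiN : l - 1 < N := by omega
  have hjN : l < N := by omega
  have hij : (⟨l - 1, hiN⟩ : Fin N) ≠ ⟨l, hjN⟩ := fin_ne_of_val_ne _ _ (by omega)
  set v' : Seq N := Function.update (Function.update v ⟨l - 1, hiN⟩ false) ⟨l, hjN⟩ true
    with hv'
  have h1 : v' ⟨l - 1, hiN⟩ = false := by
    rw [hv', Function.update_of_ne hij, Function.update_self]
  have h2 : v' ⟨l, hjN⟩ = true := by rw [hv', Function.update_self]
  have key := inv_M2 N l hl1 hlN u v' h1 h2 hside
  have hback : Function.update (Function.update v' ⟨l - 1, hiN⟩ true) ⟨l, hjN⟩ false = v := by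
    funext x
    by_cases hx : x = (⟨l, hjN⟩ : Fin N)
    · subst hx
      rw [Function.update_self, hvj]
    · rw [Function.update_of_ne hx]
      by_cases hx2 : x = (⟨l - 1, hiN⟩ : Fin N)
      · subst hx2
        rw [Function.update_self, hvi]
      · rw [Function.update_of_ne hx2, hv', Function.update_of_ne hx,
          Function.update_of_ne hx2]
  rw [hback] at key
  exact key.symm

/-- M7: `e`-flip of the last letter of the first factor. -/
lemma inv_M7 (N : ℕ) (hN : 1 ≤ N) (u v : Seq N)
    (hui : u ⟨N - 1, by omega⟩ = true) (hside : v ⟨N - 1, by omega⟩ = true) :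
    Inv N (u, v) = Inv N (Function.update u ⟨N - 1, by omega⟩ false, v) := by
  have hiN : N - 1 < N := by omega
  set u' : Seq N := Function.update u ⟨N - 1, hiN⟩ false with hu'
  have h1 : u' ⟨N - 1, hiN⟩ = false := by rw [hu', Function.update_self]
  have key := inv_M5 N hN u' v h1 hside
  have hback : Function.update u' ⟨N - 1, hiN⟩ true = u := by
    funext x
    by_cases hx : x = (⟨N - 1, hiN⟩ : Fin N)
    · subst hx; rw [Function.update_self, hui]
    · rw [Function.update_of_ne hx, hu', Function.update_of_ne hx]
  rw [hback] at key
  exact key.symm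

/-- M8: `e`-flip of the last letter of the second factor. -/
lemma inv_M8 (N : ℕ) (hN : 1 ≤ N) (u v : Seq N)
    (hvi : v ⟨N - 1, by omega⟩ = true) (hside : u ⟨N - 1, by omega⟩ = false) :
    Inv N (u, v) = Inv N (u, Function.update v ⟨N - 1, by omega⟩ false) := by
  have hiN : N - 1 < N := by omega
  set v' : Seq N := Function.update v ⟨N - 1, hiN⟩ false with hv'
  have h1 : v' ⟨N - 1, hiN⟩ = false := by rw [hv', Function.update_self]
  have key := inv_M6 N hN u v' h1 hside
  have hback : Function.update v' ⟨N - 1, hiN⟩ true = v := by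
    funext x
    by_cases hx : x = (⟨N - 1, hiN⟩ : Fin N)
    · subst hx; rw [Function.update_self, hvi]
    · rw [Function.update_of_ne hx, hv', Function.update_of_ne hx]
  rw [hback] at key
  exact key.symm

/-- Single tensor-operator steps preserve the invariant. -/
lemma Inv_step (N l : ℕ) (hl1 : 1 ≤ l) (hlN : l ≤ N) (p q : Seq N × Seq N)
    (h : teB N l p = some q ∨ tfB N l p = some q) : Inv N p = Inv N q := by
  obtain ⟨u, v⟩ := p
  by_cases hlt : l + 1 ≤ N
  · -- case l < N
    rcases h with h | h
    · unfold teB at h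
      dsimp only at h
      by_cases hc : opMax (eB N l) u ≤ opMax (fB N l) v
      · rw [if_pos hc, eB_char_lt N l hl1 hlt v] at h
        rw [opMax_eB_lt N l hl1 hlt u, opMax_fB_lt N l hl1 hlt v] at hc
        split_ifs at h with hy
        · simp only [Option.map_some, Option.some.injEq] at h
          obtain rfl := h
          have hside : ¬(u ⟨l - 1, by omega⟩ = true ∧ u ⟨l, by omega⟩ = false) := by
            intro hcc
            rw [if_pos hcc, if_neg (show ¬(v ⟨l - 1, by omega⟩ = false ∧
              v ⟨l, by omega⟩ = true) from by simp [hy.1])] at hc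
            omega
          exact inv_M4 N l hl1 hlt u v hy.1 hy.2 hside
        · exact absurd h (by simp)
      · rw [if_neg hc, eB_char_lt N l hl1 hlt u] at h
        rw [opMax_eB_lt N l hl1 hlt u, opMax_fB_lt N l hl1 hlt v] at hc
        split_ifs at h with hx
        · simp only [Option.map_some, Option.some.injEq] at h
          obtain rfl := h
          have hside : ¬(v ⟨l - 1, by omega⟩ = false ∧ v ⟨l, by omega⟩ = true) := by
            intro hcc
            rw [if_pos hx, if_pos hcc] at hc
            omega
          exact inv_M3 N l hl1 hlt u v hx.1 hx.2 hside
        · exact absurd h (by simp)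
    · unfold tfB at h
      dsimp only at h
      by_cases hc : opMax (eB N l) u < opMax (fB N l) v
      · rw [if_pos hc, fB_char_lt N l hl1 hlt v] at h
        rw [opMax_eB_lt N l hl1 hlt u, opMax_fB_lt N l hl1 hlt v] at hc
        split_ifs at h with hy
        · simp only [Option.map_some, Option.some.injEq] at h
          obtain rfl := h
          have hside : ¬(u ⟨l - 1, by omega⟩ = true ∧ u ⟨l, by omega⟩ = false) := by
            intro hcc
            rw [if_pos hcc, if_pos hy] at hc
            omega
          exact inv_M2 N l hl1 hlt u v hy.1 hy.2 hside
        · exact absurd h (by simp)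
      · rw [if_neg hc, fB_char_lt N l hl1 hlt u] at h
        rw [opMax_eB_lt N l hl1 hlt u, opMax_fB_lt N l hl1 hlt v] at hc
        split_ifs at h with hx
        · simp only [Option.map_some, Option.some.injEq] at h
          obtain rfl := h
          have hside : ¬(v ⟨l - 1, by omega⟩ = false ∧ v ⟨l, by omega⟩ = true) := by
            intro hcc
            rw [if_neg (show ¬(u ⟨l - 1, by omega⟩ = true ∧ u ⟨l, by omega⟩ = false) from
              by simp [hx.1]), if_pos hcc] at hc
            omega
          exact inv_M1 N l hl1 hlt u v hx.1 hx.2 hside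
        · exact absurd h (by simp)
  · -- case l = N
    have hlN' : l = N := by omega
    subst hlN'
    have hN : 1 ≤ l := hl1
    rcases h with h | h
    · unfold teB at h
      dsimp only at h
      by_cases hc : opMax (eB l l) u ≤ opMax (fB l l) v
      · rw [if_pos hc, eB_char_N l hN v] at h
        rw [opMax_eB_N l hN u, opMax_fB_N l hN v] at hc
        split_ifs at h with hy
        · simp only [Option.map_some, Option.some.injEq] at h
          obtain rfl := h
          have hside : u ⟨l - 1, by omega⟩ = false := by
            rcases Bool.eq_false_or_eq_true (u ⟨l - 1, by omega⟩) with h' | h'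
            · rw [if_pos h', if_neg (show ¬(v ⟨l - 1, by omega⟩ = false) from
                by simp [hy])] at hc
              omega
            · exact h'
          exact inv_M8 l hN u v hy hside
        · exact absurd h (by simp)
      · rw [if_neg hc, eB_char_N l hN u] at h
        rw [opMax_eB_N l hN u, opMax_fB_N l hN v] at hc
        split_ifs at h with hx
        · simp only [Option.map_some, Option.some.injEq] at h
          obtain rfl := h
          have hside : v ⟨l - 1, by omega⟩ = true := by
            rcases Bool.eq_false_or_eq_true (v ⟨l - 1, by omega⟩) with h' | h'
            · exact h'
            · rw [if_pos hx, if_pos h'] at hc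
              omega
          exact inv_M7 l hN u v hx hside
        · exact absurd h (by simp)
    · unfold tfB at h
      dsimp only at h
      by_cases hc : opMax (eB l l) u < opMax (fB l l) v
      · rw [if_pos hc, fB_char_N l hN v] at h
        rw [opMax_eB_N l hN u, opMax_fB_N l hN v] at hc
        split_ifs at h with hy
        · simp only [Option.map_some, Option.some.injEq] at h
          obtain rfl := h
          have hside : u ⟨l - 1, by omega⟩ = false := by
            rcases Bool.eq_false_or_eq_true (u ⟨l - 1, by omega⟩) with h' | h'
            · rw [if_pos h', if_pos hy] at hc
              omega
            · exact h'
          exact inv_M6 l hN u v hy hside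
        · exact absurd h (by simp)
      · rw [if_neg hc, fB_char_N l hN u] at h
        rw [opMax_eB_N l hN u, opMax_fB_N l hN v] at hc
        split_ifs at h with hx
        · simp only [Option.map_some, Option.some.injEq] at h
          obtain rfl := h
          have hside : v ⟨l - 1, by omega⟩ = true := by
            rcases Bool.eq_false_or_eq_true (v ⟨l - 1, by omega⟩) with h' | h'
            · exact h'
            · rw [if_neg (show ¬(u ⟨l - 1, by omega⟩ = true) from by simp [hx]),
                if_pos h'] at hc
              omega
          exact inv_M5 l hN u v hx hside
        · exact absurd h (by simp)

/-- The invariant is constant on connected components. -/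
lemma Inv_conn (N : ℕ) {p q : Seq N × Seq N} (h : ConnB N p q) : Inv N p = Inv N q := by
  induction h with
  | rel x y hxy =>
    obtain ⟨l, hl1, hlN, hor⟩ := hxy
    exact Inv_step N l hl1 hlN x y hor
  | refl x => rfl
  | symm x y _ ih => exact ih.symm
  | trans x y z _ _ ih1 ih2 => exact ih1.trans ih2

end Aux4
section Aux5

lemma sum_aux (n k : ℕ) (hk : k ≤ n) :
    (∑ i ∈ Finset.range n, (if i < k then (0 : ℤ) else 1)) = n - k := by
  induction n with
  | zero =>
    have : k = 0 := by omega
    subst this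
    simp
  | succ m ih =>
    rw [Finset.sum_range_succ]
    by_cases hkm : k ≤ m
    · rw [ih hkm, if_neg (by omega)]
      push_cast
      ring
    · have hkm' : k = m + 1 := by omega
      subst hkm'
      rw [Finset.sum_eq_zero (fun i hi => by
        rw [if_pos (show i < m + 1 from by
          have := Finset.mem_range.mp hi; omega)]), if_pos (show m < m + 1 by omega)]
      push_cast
      ring

lemma dterm_top_low_nonneg (N k : ℕ) (i : ℕ) : 0 ≤ dterm (top N) (lowSeq N k) i := by
  rw [dterm]
  by_cases h : i < N
  · rw [dif_pos h, show top N ⟨i, h⟩ = true from rfl]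
    split_ifs <;> simp_all
  · rw [dif_neg h]

lemma DD_top_low_N (N k : ℕ) (hk : k ≤ N) : DD (top N) (lowSeq N k) N = (N : ℤ) - k := by
  have hcg : ∀ i ∈ Finset.range N, dterm (top N) (lowSeq N k) i =
      (if i < k then (0 : ℤ) else 1) := by
    intro i hi
    have hiN := Finset.mem_range.mp hi
    rw [dterm, dif_pos hiN]
    by_cases hik : i < k
    · simp [top, lowSeq, hik]
    · simp [top, lowSeq, hik]
  rw [DD, Finset.sum_congr rfl hcg, sum_aux N k hk]

lemma Inv_top_low (N k : ℕ) (hk : k ≤ N) : Inv N (top N, lowSeq N k) = (N : ℤ) - k := by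
  unfold Inv
  dsimp only
  apply le_antisymm
  · apply Finset.sup'_le
    intro j hj
    have hjN : j ≤ N := by have := Finset.mem_range.mp hj; omega
    calc DD (top N) (lowSeq N k) j ≤ DD (top N) (lowSeq N k) N :=
          Finset.sum_le_sum_of_subset_of_nonneg (Finset.range_subset_range.mpr hjN)
            (fun i _ _ => dterm_top_low_nonneg N k i)
      _ = (N : ℤ) - k := DD_top_low_N N k hk
  · have h := Finset.le_sup' (DD (top N) (lowSeq N k))
      (Finset.mem_range.mpr (show N < N + 1 by omega))
    rwa [DD_top_low_N N k hk] at h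

/-- Termination measure. -/
def msr {N : ℕ} (b : Seq N) : ℕ := ∑ i : Fin N, (if b i = false then N - (i : ℕ) else 0)

lemma msr_update {N : ℕ} (b : Seq N) (i0 : Fin N) (t : Bool) :
    msr (Function.update b i0 t) = (if t = false then N - (i0 : ℕ) else 0) +
      ∑ x ∈ Finset.univ \ {i0}, (if b x = false then N - (x : ℕ) else 0) := by
  unfold msr
  have hfun : ∀ x, (if (Function.update b i0 t) x = false then N - (x : ℕ) else 0) =
      Function.update (fun y => if b y = false then N - (y : ℕ) else 0) i0
        (if t = false then N - (i0 : ℕ) else 0) x := by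
    intro x
    by_cases hx : x = i0
    · subst hx
      rw [Function.update_self, Function.update_self]
    · rw [Function.update_of_ne hx, Function.update_of_ne hx]
  rw [Finset.sum_congr rfl (fun x _ => hfun x),
    Finset.sum_update_of_mem (Finset.mem_univ i0)]

lemma fB_msr (N l : ℕ) (hl1 : 1 ≤ l) (hlN : l ≤ N) (b b' : Seq N) (h : fB N l b = some b') :
    msr b' + 1 = msr b := by
  by_cases hlt : l + 1 ≤ N
  · rw [fB_char_lt N l hl1 hlt] at h
    split_ifs at h with hb
    · injection h with h'
      subst h'
      have hiN : l - 1 < N := by omega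
      have hjN : l < N := by omega
      have hij : (⟨l - 1, hiN⟩ : Fin N) ≠ ⟨l, hjN⟩ := fin_ne_of_val_ne _ _ (by omega)
      have hb1 : b ⟨l - 1, hiN⟩ = false := hb.1
      have hb2 : b ⟨l, hjN⟩ = true := hb.2
      have himem : (⟨l - 1, hiN⟩ : Fin N) ∈ Finset.univ \ {(⟨l, hjN⟩ : Fin N)} := by
        rw [Finset.mem_sdiff]
        exact ⟨Finset.mem_univ _, by simp [hij]⟩
      rw [msr_update]
      have hfun2 : ∀ x, (if (Function.update b ⟨l - 1, hiN⟩ true) x = false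
            then N - (x : ℕ) else 0) =
          Function.update (fun y => if b y = false then N - (y : ℕ) else 0)
            ⟨l - 1, hiN⟩ 0 x := by
        intro x
        by_cases hx : x = (⟨l - 1, hiN⟩ : Fin N)
        · subst hx
          rw [Function.update_self, Function.update_self]
          simp
        · rw [Function.update_of_ne hx, Function.update_of_ne hx]
      rw [Finset.sum_congr rfl (fun x _ => hfun2 x), Finset.sum_update_of_mem himem]
      have hmsrb : msr b = (if b ⟨l, hjN⟩ = false then N - l else 0) +
          ((if b ⟨l - 1, hiN⟩ = false then N - (l - 1) else 0) +
            ∑ x ∈ (Finset.univ \ {(⟨l, hjN⟩ : Fin N)}) \ {(⟨l - 1, hiN⟩ : Fin N)},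
              (if b x = false then N - (x : ℕ) else 0)) := by
        unfold msr
        rw [Finset.sum_eq_sum_sdiff_singleton_add (Finset.mem_univ (⟨l, hjN⟩ : Fin N)),
          Finset.sum_eq_sum_sdiff_singleton_add himem]
        ring
      rw [hmsrb, hb1, hb2]
      simp only [Fin.val_mk]
      norm_num
      omega
  · have hlN' : l = N := by omega
    subst hlN'
    rw [fB_char_N l hl1] at h
    split_ifs at h with hb
    · injection h with h'
      subst h'
      have hiN : l - 1 < l := by omega
      rw [msr_update]
      have hmsrb : msr b = (if b ⟨l - 1, hiN⟩ = false then l - (l - 1) else 0) +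
          ∑ x ∈ Finset.univ \ {(⟨l - 1, hiN⟩ : Fin l)},
            (if b x = false then l - (x : ℕ) else 0) := by
        unfold msr
        rw [Finset.sum_eq_sum_sdiff_singleton_add (Finset.mem_univ (⟨l - 1, hiN⟩ : Fin l))]
        ring
      rw [hmsrb, hb]
      simp only [Fin.val_mk]
      norm_num
      omega

end Aux5
section Aux6

lemma seq_closure (N : ℕ) (b : Seq N)
    (hstep : ∀ l (h1 : 1 ≤ l) (h2 : l + 1 ≤ N),
      ¬(b ⟨l - 1, by omega⟩ = false ∧ b ⟨l, by omega⟩ = true)) :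
    ∀ (c : ℕ) (hc : c < N), b ⟨c, hc⟩ = true →
      ∀ (a : ℕ) (ha : a < N), a ≤ c → b ⟨a, ha⟩ = true := by
  intro c
  induction c with
  | zero =>
    intro hc hb a ha hac
    have : a = 0 := by omega
    subst this
    exact hb
  | succ c ih =>
    intro hc hb a ha hac
    by_cases hace : a = c + 1
    · subst hace
      exact hb
    · have hbc : b ⟨c, by omega⟩ = true := by
        rcases Bool.eq_false_or_eq_true (b ⟨c, by omega⟩) with h' | h'
        · exact h'
        · exact absurd ⟨h', hb⟩ (hstep (c + 1) (by omega) (by omega))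
      exact ih (by omega) hbc a ha (by omega)

/-- Part 2: characterization of the lowest-weight elements. -/
lemma lw_char (N : ℕ) (hN : 1 ≤ N) (x y : Seq N) :
    (∀ l, 1 ≤ l → l ≤ N → tfB N l (x, y) = none) ↔
      (x = top N ∧ ∃ k, k ≤ N ∧ y = lowSeq N k) := by
  constructor
  · intro H
    have hx_none : ∀ l, 1 ≤ l → l ≤ N →
        fB N l x = none ∧ ¬(opMax (eB N l) x < opMax (fB N l) y) := by
      intro l h1 h2
      have h := H l h1 h2
      unfold tfB at h
      dsimp only at h
      by_cases hc : opMax (eB N l) x < opMax (fB N l) y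
      · rw [if_pos hc] at h
        have hyn : fB N l y = none := Option.map_eq_none_iff.mp h
        rw [opMax_of_none _ _ hyn] at hc
        omega
      · rw [if_neg hc] at h
        exact ⟨Option.map_eq_none_iff.mp h, hc⟩
    have hxlast : x ⟨N - 1, by omega⟩ = true := by
      have h := (hx_none N hN le_rfl).1
      rw [fB_char_N N hN] at h
      rcases Bool.eq_false_or_eq_true (x ⟨N - 1, by omega⟩) with h' | h'
      · exact h'
      · rw [if_pos h'] at h
        exact absurd h (by simp)
    have hstepx : ∀ l (h1 : 1 ≤ l) (h2 : l + 1 ≤ N),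
        ¬(x ⟨l - 1, by omega⟩ = false ∧ x ⟨l, by omega⟩ = true) := by
      intro l h1 h2 hcc
      have h := (hx_none l h1 (by omega)).1
      rw [fB_char_lt N l h1 h2, if_pos hcc] at h
      exact absurd h (by simp)
    have hxtop : x = top N := by
      funext i
      exact seq_closure N x hstepx (N - 1) (by omega) hxlast (i : ℕ) i.isLt
        (by have := i.isLt; omega)
    subst hxtop
    have hstepy : ∀ l (h1 : 1 ≤ l) (h2 : l + 1 ≤ N),
        ¬(y ⟨l - 1, by omega⟩ = false ∧ y ⟨l, by omega⟩ = true) := by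
      intro l h1 h2 hcc
      have h := (hx_none l h1 (by omega)).2
      rw [opMax_eB_lt N l h1 h2, opMax_fB_lt N l h1 h2, if_pos hcc,
        if_neg (show ¬(top N ⟨l - 1, by omega⟩ = true ∧ top N ⟨l, by omega⟩ = false) from
          by simp [top])] at h
      omega
    refine ⟨rfl, ?_⟩
    set S : Set ℕ := {m | ∀ i : Fin N, m ≤ (i : ℕ) → y i = false} with hS
    have hSN : N ∈ S := fun i hi => absurd i.isLt (by omega)
    have hSne : S.Nonempty := ⟨N, hSN⟩
    have hkS : sInf S ∈ S := Nat.sInf_mem hSne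
    have hkN : sInf S ≤ N := Nat.sInf_le hSN
    refine ⟨sInf S, hkN, funext fun i => ?_⟩
    by_cases hik : (i : ℕ) < sInf S
    · have hyi : y i = true := by
        rcases Bool.eq_false_or_eq_true (y i) with h' | h'
        · exact h'
        · exfalso
          have hiS : (i : ℕ) ∈ S := by
            intro i' hi'
            rcases Bool.eq_false_or_eq_true (y i') with h'' | h''
            · have hcl := seq_closure N y hstepy (i' : ℕ) i'.isLt h'' (i : ℕ) i.isLt hi'
              rw [show (⟨(i : ℕ), i.isLt⟩ : Fin N) = i from rfl] at hcl
              rw [hcl] at h'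
              exact absurd h' (by simp)
            · exact h''
          have := Nat.sInf_le hiS
          omega
      rw [hyi, lowSeq]
      simp [hik]
    · have hyi : y i = false := hkS i (by omega)
      rw [hyi, lowSeq]
      simp
      omega
  · rintro ⟨hx, k, hkN, hy⟩
    subst hx
    subst hy
    intro l hl1 hlN
    unfold tfB
    dsimp only
    by_cases hlt : l + 1 ≤ N
    · by_cases hc : opMax (eB N l) (top N) < opMax (fB N l) (lowSeq N k)
      · rw [if_pos hc, fB_char_lt N l hl1 hlt, if_neg]
        · rfl
        · intro hcc
          have h1 : ¬(l - 1 < k) := by simpa [lowSeq] using hcc.1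
          have h2 : l < k := by simpa [lowSeq] using hcc.2
          omega
      · rw [if_neg hc, fB_char_lt N l hl1 hlt, if_neg]
        · rfl
        · intro hcc
          exact absurd hcc.1 (by simp [top])
    · have hlN' : l = N := by omega
      subst hlN'
      have hN' : 1 ≤ l := hl1
      by_cases hc : opMax (eB l l) (top l) < opMax (fB l l) (lowSeq l k)
      · exfalso
        rw [opMax_eB_N l hN' (top l), opMax_fB_N l hN' (lowSeq l k),
          if_pos (show top l ⟨l - 1, by omega⟩ = true from rfl)] at hc
        split_ifs at hc <;> omega
      · rw [if_neg hc, fB_char_N l hN', if_neg]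
        · rfl
        · simp [top]

/-- Every element is connected to some lowest-weight element. -/
lemma exists_conn (N : ℕ) (hN : 1 ≤ N) : ∀ u v : Seq N,
    ∃ k, k ≤ N ∧ ConnB N (u, v) (top N, lowSeq N k) := by
  have main : ∀ n, ∀ u v : Seq N, msr u + msr v ≤ n →
      ∃ k, k ≤ N ∧ ConnB N (u, v) (top N, lowSeq N k) := by
    intro n
    induction n using Nat.strong_induction_on with
    | _ n ih =>
      intro u v hn
      by_cases hlw : ∀ l, 1 ≤ l → l ≤ N → tfB N l (u, v) = none
      · obtain ⟨hx, k, hkN, hy⟩ := (lw_char N hN u v).mp hlw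
        exact ⟨k, hkN, by rw [hx, hy]; exact Relation.EqvGen.refl _⟩
      · push_neg at hlw
        obtain ⟨l, hl1, hlN, hne⟩ := hlw
        obtain ⟨q, hq⟩ := Option.ne_none_iff_exists'.mp hne
        have hdec : msr q.1 + msr q.2 + 1 ≤ msr u + msr v := by
          unfold tfB at hq
          dsimp only at hq
          split_ifs at hq
          · obtain ⟨y', hy', hqq⟩ := Option.map_eq_some_iff.mp hq
            have hm := fB_msr N l hl1 hlN v y' hy'
            rw [← hqq]
            dsimp only
            omega
          · obtain ⟨x', hx', hqq⟩ := Option.map_eq_some_iff.mp hq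
            have hm := fB_msr N l hl1 hlN u x' hx'
            rw [← hqq]
            dsimp only
            omega
        have hlt : msr q.1 + msr q.2 < n := by omega
        obtain ⟨k, hkN, hconn⟩ := ih _ hlt q.1 q.2 le_rfl
        refine ⟨k, hkN, Relation.EqvGen.trans _ _ _
          (Relation.EqvGen.rel _ _ ⟨l, hl1, hlN, Or.inr ?_⟩) hconn⟩
        rw [hq]
  exact fun u v => main (msr u + msr v) u v le_rfl

end Aux6

/-- Decomposition of `B_sp ⊗ B_sp` (type `B_N`, `N ≥ 1`): every
element lies in the connected component of exactly one of the elements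
`(+,…,+) ⊗ (+^k, −^{N−k})` with `0 ≤ k ≤ N`, and these elements are precisely the
elements killed by all tensor-product operators `f̃_l`, `1 ≤ l ≤ N`. -/
theorem Bsp_tensor_Bsp_decomposition_B (N : ℕ) (hN : 1 ≤ N) :
    (∀ u v : Seq N,
      ∃! k, k ≤ N ∧ ConnB N (u, v) (top N, lowSeq N k)) ∧
    (∀ x y : Seq N,
      ((∀ l, 1 ≤ l → l ≤ N → tfB N l (x, y) = none) ↔
        (x = top N ∧ ∃ k, k ≤ N ∧ y = lowSeq N k))) := by
  constructor
  · intro u v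
    obtain ⟨k, hkN, hconn⟩ := exists_conn N hN u v
    refine ⟨k, ⟨hkN, hconn⟩, ?_⟩
    rintro k' ⟨hk'N, hconn'⟩
    have h1 := Inv_conn N hconn
    have h2 := Inv_conn N hconn'
    rw [Inv_top_low N k hkN] at h1
    rw [Inv_top_low N k' hk'N] at h2
    omega
  · intro x y
    exact lw_char N hN x y

end CrystalPaper
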